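/- arXiv:1008.3490 — 2 statements merged into one kernel-verified Lean document; each statement's English description precedes it below -/
import Mathlib

section
/- Let $X$ be a separable infinite dimensional complex Banach space and $T$ a bounded linear operator on $X$. Suppose there exist a perfect compact set $K \subseteq \mathbb{T}$ and a continuous map $\lambda \mapsto x_\lambda$ from $K$ to $X$ such that $T x_\lambda = \lambda x_\lambda$ for each $\lambda \in K$, and the linear span of $\{x_\lambda : \lambda \in K\}$ is dense in $X$. Then $T$ is hypercyclic, i.e., there exists $x \in X$ whose orbit $\{T^n x : n \ge 0\}$ is dense in $X$. -/
open Complex Metric Set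

namespace Stmt12Aux



lemma plateau (θ ε : ℝ) (hθ : 0 < θ) (L : ℕ) (hLθ : (L+1)*θ ≤ ε) (a : ℕ) :
    ∃ b : ℕ, a ≤ b ∧ b + L ≤ a + (⌈1/θ⌉₊ + 2 + L) ∧
      ∀ n : ℕ, b ≤ n → n ≤ b + L → ∃ m : ℤ, |(n:ℝ)*θ - m - 1/2| ≤ ε := by
  have haθ : (0:ℝ) ≤ (a:ℝ)*θ := by positivity
  set m : ℤ := ⌈(a:ℝ)*θ - 1/2⌉ with hm
  have hm1 : (a:ℝ)*θ ≤ (m:ℝ) + 1/2 := by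
    have := Int.le_ceil ((a:ℝ)*θ - 1/2); rw [← hm] at this; linarith
  have hm2 : (m:ℝ) + 1/2 < (a:ℝ)*θ + 1 := by
    have := Int.ceil_lt_add_one ((a:ℝ)*θ - 1/2); rw [← hm] at this; linarith
  have hm0 : (0:ℤ) ≤ m := by
    have h1 : (-1:ℝ) < (m:ℝ) := by linarith
    have h2 : (-1:ℤ) < m := by exact_mod_cast h1
    omega
  have hmpos : (0:ℝ) < (m:ℝ) + 1/2 := by
    have : (0:ℝ) ≤ (m:ℝ) := by exact_mod_cast hm0
    linarith
  set b : ℕ := ⌈((m:ℝ) + 1/2)/θ⌉₊ with hb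
  have hb1 : ((m:ℝ)+1/2)/θ ≤ (b:ℝ) := Nat.le_ceil _
  have hb2 : (b:ℝ) < ((m:ℝ)+1/2)/θ + 1 := by
    have := Nat.ceil_lt_add_one (le_of_lt (div_pos hmpos hθ))
    rw [← hb] at this; exact this
  have hbθ1 : (m:ℝ)+1/2 ≤ (b:ℝ)*θ := by
    rw [div_le_iff₀ hθ] at hb1; linarith
  have hbθ2 : (b:ℝ)*θ < (m:ℝ) + 1/2 + θ := by
    have : ((b:ℝ) - 1) * θ < (m:ℝ)+1/2 := by
      rw [← lt_div_iff₀ hθ]; linarith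
    nlinarith
  have hab : a ≤ b := by
    have : (a:ℝ)*θ ≤ (b:ℝ)*θ := by linarith
    have := le_of_mul_le_mul_right this hθ
    exact_mod_cast this
  refine ⟨b, hab, ?_, ?_⟩
  · have h1θ : 1/θ ≤ (⌈1/θ⌉₊ : ℝ) := Nat.le_ceil _
    have : (b:ℝ) < (a:ℝ) + (⌈1/θ⌉₊:ℝ) + 2 := by
      have : (b:ℝ)*θ < (a:ℝ)*θ + 1 + θ := by linarith
      have h2 : (b:ℝ) < ((a:ℝ)*θ+1+θ)/θ := (lt_div_iff₀ hθ).mpr this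
      have h3 : ((a:ℝ)*θ+1+θ)/θ = (a:ℝ) + 1/θ + 1 := by field_simp
      rw [h3] at h2
      linarith
    have : b < a + ⌈1/θ⌉₊ + 2 := by exact_mod_cast this
    omega
  · intro n hbn hnL
    refine ⟨m, ?_⟩
    have hcast1 : (b:ℝ) ≤ (n:ℝ) := by exact_mod_cast hbn
    have hcast2 : (n:ℝ) ≤ (b:ℝ) + (L:ℝ) := by exact_mod_cast hnL
    have hlow : (m:ℝ) + 1/2 ≤ (n:ℝ)*θ := by nlinarith
    have hhigh : (n:ℝ)*θ ≤ (m:ℝ) + 1/2 + ε := by nlinarith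
    rw [abs_le]; constructor <;> linarith

lemma combo {ι : Type*} [DecidableEq ι] (ε : ℝ) (hε : 0 < ε) (S : ι → Set ℝ)
    (hS : ∀ l, ∀ η > 0, ∃ θ ∈ S l, 0 < θ ∧ θ ≤ η) (F : Finset ι) :
    ∃ (θ : ι → ℝ) (G : ℕ), (∀ l ∈ F, θ l ∈ S l) ∧
      ∀ a : ℕ, ∃ n : ℕ, a ≤ n ∧ n ≤ a + G ∧
        ∀ l ∈ F, ∃ m : ℤ, |(n:ℝ) * θ l - m - 1/2| ≤ ε := by
  induction F using Finset.induction_on with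
  | empty =>
      exact ⟨fun _ => 1, 0, by simp, fun a => ⟨a, le_refl _, by simp, by simp⟩⟩
  | @insert i F hi ih =>
      obtain ⟨θt, G, hθt, hsyn⟩ := ih
      obtain ⟨θ0, hθ0S, hθ0pos, hθ0le⟩ := hS i (ε/(G+1)) (by positivity)
      have hGθ : ((G:ℝ)+1)*θ0 ≤ ε := by
        rw [le_div_iff₀ (by positivity)] at hθ0le; linarith
      refine ⟨Function.update θt i θ0, ⌈1/θ0⌉₊ + 2 + G + G, ?_, ?_⟩
      · intro l hl
        rcases Finset.mem_insert.mp hl with rfl | hlF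
        · simpa using hθ0S
        · rw [Function.update_of_ne (fun h => hi (by rw [← h]; exact hlF))]
          exact hθt l hlF
      · intro a
        obtain ⟨b, hab, hbL, hgood⟩ := plateau θ0 ε hθ0pos G hGθ a
        obtain ⟨n, hbn, hnG, htail⟩ := hsyn b
        refine ⟨n, le_trans hab hbn, by omega, ?_⟩
        intro l hl
        rcases Finset.mem_insert.mp hl with rfl | hlF
        · rw [Function.update_self]
          exact hgood n hbn (by omega)
        · rw [Function.update_of_ne (fun h => hi (by rw [← h]; exact hlF))]
          exact htail l hlF




lemma exp_shift (m : ℤ) (c : ℝ) :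
    Complex.exp (((2*Real.pi*m + Real.pi + c : ℝ) : ℂ) * Complex.I)
      = -Complex.exp ((c:ℝ) * Complex.I) := by
  rw [show ((2*Real.pi*m + Real.pi + c : ℝ) : ℂ) * Complex.I
        = (m:ℂ)*(2*Real.pi*Complex.I) + Real.pi*Complex.I + (c:ℝ)*Complex.I by
      push_cast; ring]
  rw [Complex.exp_add, Complex.exp_add, Complex.exp_int_mul_two_pi_mul_I,
    Complex.exp_pi_mul_I]
  ring

lemma exp_shift_neg (m : ℤ) (c : ℝ) :
    Complex.exp (((-(2*Real.pi*m + Real.pi + c) : ℝ) : ℂ) * Complex.I)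
      = -Complex.exp (((-c : ℝ) : ℂ) * Complex.I) := by
  rw [show ((-(2*Real.pi*m + Real.pi + c) : ℝ) : ℂ) * Complex.I
        = -(((2*Real.pi*m + Real.pi + c : ℝ) : ℂ) * Complex.I) by push_cast; ring]
  rw [Complex.exp_neg, exp_shift]
  rw [show ((-c : ℝ) : ℂ) * Complex.I = -(((c:ℝ):ℂ) * Complex.I) by push_cast; ring]
  rw [Complex.exp_neg, inv_neg]

lemma ratio_pow (ν ζ : ℂ) (hν : ‖ν‖ = 1) (hζ : ‖ζ‖ = 1)
    (n : ℕ) (m : ℤ) (ε : ℝ) (hε0 : 0 ≤ ε) (hε : 2*Real.pi*ε ≤ 1)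
    (hm : |(n:ℝ) * (|Complex.arg (ζ/ν)| / (2*Real.pi)) - m - 1/2| ≤ ε) :
    ‖ζ^n + ν^n‖ ≤ 4*Real.pi*ε := by
  have hπ : (0:ℝ) < Real.pi := Real.pi_pos
  have hνne : ν ≠ 0 := by
    intro h; rw [h] at hν; simp at hν
  set z := ζ/ν with hz
  have hzabs : ‖z‖ = 1 := by rw [hz, norm_div, hν, hζ]; norm_num
  have hzexp : z = Complex.exp ((Complex.arg z : ℂ) * Complex.I) := by
    conv_lhs => rw [← Complex.norm_mul_exp_arg_mul_I z]
    rw [hzabs]; simp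
  set s := Complex.arg z with hs
  obtain ⟨err, herrle, hns⟩ :
      ∃ e : ℝ, |e| ≤ ε ∧ (n:ℝ) * |s| = 2*Real.pi*m + Real.pi + 2*Real.pi*e := by
    refine ⟨(n:ℝ) * (|s|/(2*Real.pi)) - m - 1/2, hm, ?_⟩
    field_simp
    ring
  have habsc : |2*Real.pi*err| ≤ 2*Real.pi*ε := by
    rw [abs_mul, abs_of_pos (by positivity : (0:ℝ) < 2*Real.pi)]
    exact mul_le_mul_of_nonneg_left herrle (by positivity)
  have hzpow : z^n = Complex.exp ((((n:ℝ)*s : ℝ):ℂ) * Complex.I) := by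
    rw [hzexp, ← Complex.exp_nat_mul]
    push_cast
    ring_nf
  have key : ∃ c : ℝ, |c| ≤ 2*Real.pi*ε ∧ z^n = -Complex.exp ((c:ℝ) * Complex.I) := by
    rcases le_or_gt 0 s with hspos | hsneg
    · have h1 : (n:ℝ)*s = 2*Real.pi*m + Real.pi + 2*Real.pi*err := by
        rw [_root_.abs_of_nonneg hspos] at hns; exact hns
      rw [h1] at hzpow
      exact ⟨2*Real.pi*err, habsc, by rw [hzpow, exp_shift]⟩
    · have h1 : (n:ℝ)*s = -(2*Real.pi*m + Real.pi + 2*Real.pi*err) := by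
        rw [_root_.abs_of_neg hsneg] at hns; linarith
      rw [h1] at hzpow
      exact ⟨-(2*Real.pi*err), by rwa [abs_neg], by rw [hzpow, exp_shift_neg]⟩
  obtain ⟨c, hcle, hcz⟩ := key
  have hfact : ζ^n + ν^n = ν^n * (z^n + 1) := by
    rw [hz, div_pow]
    field_simp
  rw [hfact, norm_mul, norm_pow, hν, one_pow, one_mul, hcz]
  have hneg : -Complex.exp ((c:ℝ) * Complex.I) + 1
      = -(Complex.exp ((c:ℝ)*Complex.I) - 1) := by ring
  rw [hneg, norm_neg]
  have habsci : ‖(c:ℝ)*Complex.I‖ = |c| := by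
    rw [norm_mul, Complex.norm_I, Complex.norm_real, Real.norm_eq_abs, mul_one]
  have h1 : ‖(c:ℝ)*Complex.I‖ ≤ 1 := by rw [habsci]; linarith
  calc ‖Complex.exp ((c:ℝ)*Complex.I) - 1‖
      ≤ 2 * ‖(c:ℝ)*Complex.I‖ := Complex.norm_exp_sub_one_le h1
    _ ≤ 4*Real.pi*ε := by rw [habsci]; linarith




lemma abs_one_of_mem {K : Set ℂ} (hKsub : K ⊆ Metric.sphere (0:ℂ) 1) {ν : ℂ}
    (hν : ν ∈ K) : ‖ν‖ = 1 := by
  have := hKsub hν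
  rw [Metric.mem_sphere, Complex.dist_eq, sub_zero] at this
  exact this

lemma angle_avail {K : Set ℂ} (hKsub : K ⊆ Metric.sphere (0:ℂ) 1) (hKperf : Perfect K)
    {ν : ℂ} (hν : ν ∈ K) {δ : ℝ} (hδ : 0 < δ) {η : ℝ} (hη : 0 < η) :
    ∃ ζ ∈ K, ζ ≠ ν ∧ dist ζ ν < δ ∧
      0 < |Complex.arg (ζ/ν)|/(2*Real.pi) ∧ |Complex.arg (ζ/ν)|/(2*Real.pi) ≤ η := by
  have hπ : (0:ℝ) < Real.pi := Real.pi_pos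
  have hνabs : ‖ν‖ = 1 := abs_one_of_mem hKsub hν
  have hνne : ν ≠ 0 := by intro h; rw [h] at hνabs; simp at hνabs
  have hcont : ContinuousAt Complex.arg 1 :=
    Complex.continuousAt_arg (by simp [Complex.mem_slitPlane_iff])
  rw [Metric.continuousAt_iff] at hcont
  obtain ⟨δ', hδ'pos, hδ'⟩ := hcont (2*Real.pi*η) (by positivity)
  have hacc := (accPt_iff_nhds).mp (hKperf.acc ν hν)
  obtain ⟨ζ, ⟨hζball, hζK⟩, hζne⟩ :=
    hacc (Metric.ball ν (min δ δ')) (Metric.ball_mem_nhds ν (by positivity))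
  have hζabs : ‖ζ‖ = 1 := abs_one_of_mem hKsub hζK
  have hdist : dist ζ ν < min δ δ' := Metric.mem_ball.mp hζball
  have hdistdiv : dist (ζ/ν) 1 = dist ζ ν := by
    rw [Complex.dist_eq, Complex.dist_eq]
    rw [show ζ/ν - 1 = (ζ - ν)/ν by field_simp]
    rw [norm_div, hνabs, div_one]
  have hargsmall : |Complex.arg (ζ/ν)| < 2*Real.pi*η := by
    have := hδ' (show dist (ζ/ν) 1 < δ' by rw [hdistdiv]; exact lt_of_lt_of_le hdist (min_le_right _ _))
    rwa [Complex.arg_one, Real.dist_eq, sub_zero] at this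
  have hargne : Complex.arg (ζ/ν) ≠ 0 := by
    intro h0
    have habsdiv : ‖ζ/ν‖ = 1 := by rw [norm_div, hζabs, hνabs]; norm_num
    have : ζ/ν = 1 := Complex.ext_norm_arg (by rw [habsdiv, norm_one]) (by rw [h0, Complex.arg_one])
    exact hζne ((div_eq_one_iff_eq hνne).mp this)
  refine ⟨ζ, hζK, hζne, lt_of_lt_of_le hdist (min_le_left _ _), ?_, ?_⟩
  · positivity
  · rw [div_le_iff₀ (by positivity)]
    nlinarith [abs_nonneg (Complex.arg (ζ/ν))]

lemma pow_eig {X : Type*} [NormedAddCommGroup X] [NormedSpace ℂ X]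
    (T : X →L[ℂ] X) (x : ℂ → X) {K : Set ℂ} (heig : ∀ l ∈ K, T (x l) = l • x l)
    (n : ℕ) {l : ℂ} (hl : l ∈ K) : (T ^ n) (x l) = l ^ n • x l := by
  induction n with
  | zero => simp
  | succ n ih =>
      rw [pow_succ, ContinuousLinearMap.mul_apply, heig l hl, map_smul, ih,
        pow_succ, smul_smul, mul_comm]




lemma pair_bound {X : Type*} [NormedAddCommGroup X] [NormedSpace ℂ X]
    (c α β : ℂ) (y1 y2 : X) (e γ M : ℝ)
    (hα : ‖α‖ = 1) (hsum : ‖α + β‖ ≤ γ)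
    (hy : ‖y1 - y2‖ ≤ e) (hy2 : ‖y2‖ ≤ M) (hM : 0 ≤ M) :
    ‖(c/2) • (α • y1 + β • y2)‖ ≤ ‖c‖ / 2 * (e + γ * M) := by
  have hrw : α • y1 + β • y2 = α • (y1 - y2) + (α + β) • y2 := by module
  rw [hrw, norm_smul]
  have h1 : ‖α • (y1 - y2) + (α + β) • y2‖ ≤ e + γ * M := by
    calc ‖α • (y1 - y2) + (α + β) • y2‖
        ≤ ‖α • (y1 - y2)‖ + ‖(α + β) • y2‖ := norm_add_le _ _
      _ ≤ e + γ * M := by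
          rw [norm_smul, norm_smul]
          have e1 : ‖α‖ * ‖y1 - y2‖ ≤ e := by
            rw [hα, one_mul]; exact hy
          have e2 : ‖α + β‖ * ‖y2‖ ≤ γ * M := by
            exact mul_le_mul hsum hy2 (norm_nonneg _) (le_trans (norm_nonneg _) hsum)
          linarith
  have hc : ‖c/2‖ = ‖c‖ / 2 := by
    rw [norm_div]
    norm_num
  rw [hc]
  exact mul_le_mul_of_nonneg_left h1 (by positivity)

lemma abs_one_of_mem' {K : Set ℂ} (hKsub : K ⊆ Metric.sphere (0:ℂ) 1) {ν : ℂ}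
    (hν : ν ∈ K) : ‖ν‖ = 1 := by
  have := hKsub hν
  rwa [Metric.mem_sphere, Complex.dist_eq, sub_zero] at this

lemma inv_pow_add_abs (μ ζ : ℂ) (hμ : ‖μ‖ = 1) (hζ : ‖ζ‖ = 1) (n : ℕ) :
    ‖μ⁻¹^n + ζ⁻¹^n‖ = ‖ζ^n + μ^n‖ := by
  have hμ0 : μ ≠ 0 := by intro h; rw [h] at hμ; simp at hμ
  have hζ0 : ζ ≠ 0 := by intro h; rw [h] at hζ; simp at hζ
  have hμn : μ^n ≠ 0 := pow_ne_zero _ hμ0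
  have hζn : ζ^n ≠ 0 := pow_ne_zero _ hζ0
  rw [inv_pow, inv_pow, show (μ^n)⁻¹ + (ζ^n)⁻¹ = (ζ^n + μ^n)/(μ^n * ζ^n) by
    field_simp]
  rw [norm_div, norm_mul, norm_pow, norm_pow, hμ, hζ]
  norm_num

section Transitive

variable {X : Type*} [NormedAddCommGroup X] [NormedSpace ℂ X]

lemma transitive_step (T : X →L[ℂ] X) (K : Set ℂ) (hKsub : K ⊆ Metric.sphere (0:ℂ) 1)
    (hKperf : Perfect K) (x : ℂ → X) (hcont : ContinuousOn x K)
    (heig : ∀ l ∈ K, T (x l) = l • x l)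
    (hdense : Dense (Submodule.span ℂ (x '' K) : Set X))
    (U V : Set X) (hU : IsOpen U) (hUne : U.Nonempty) (hV : IsOpen V) (hVne : V.Nonempty) :
    ∃ (z : X) (n : ℕ), z ∈ U ∧ (T ^ n) z ∈ V := by
  obtain ⟨u, huspan, huU⟩ := hdense.exists_mem_open hU hUne
  obtain ⟨v, hvspan, hvV⟩ := hdense.exists_mem_open hV hVne
  obtain ⟨εU, hεU, hballU⟩ := Metric.isOpen_iff.mp hU u huU
  obtain ⟨εV, hεV, hballV⟩ := Metric.isOpen_iff.mp hV v hvV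
  obtain ⟨r, f, gf, hu⟩ := Submodule.mem_span_set'.mp huspan
  obtain ⟨s, b, gb, hv⟩ := Submodule.mem_span_set'.mp hvspan
  choose lam hlamK hlamx using fun i : Fin r => (Set.mem_image _ _ _).mp (gf i).2
  choose mu hmuK hmux using fun j : Fin s => (Set.mem_image _ _ _).mp (gb j).2
  obtain ⟨ν, hνdef⟩ : ∃ ν : Fin r ⊕ Fin s → ℂ, ν = Sum.elim lam mu := ⟨_, rfl⟩
  have hνK : ∀ l, ν l ∈ K := by
    rintro (i|j)
    · rw [hνdef, Sum.elim_inl]; exact hlamK i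
    · rw [hνdef, Sum.elim_inr]; exact hmuK j
  have hνabs : ∀ l, ‖ν l‖ = 1 := fun l => abs_one_of_mem hKsub (hνK l)
  have hu' : ∑ i, f i • x (ν (Sum.inl i)) = u := by
    rw [← hu]
    exact Finset.sum_congr rfl fun i _ => by rw [hνdef, Sum.elim_inl, hlamx i]
  have hv' : ∑ j, b j • x (ν (Sum.inr j)) = v := by
    rw [← hv]
    exact Finset.sum_congr rfl fun j _ => by rw [hνdef, Sum.elim_inr, hmux j]
  obtain ⟨ε', hε'⟩ : ∃ t : ℝ, t = min εU εV := ⟨_, rfl⟩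
  have hε'pos : 0 < ε' := hε' ▸ lt_min hεU hεV
  obtain ⟨A, hA⟩ : ∃ t : ℝ, t = (∑ i, ‖f i‖) + (∑ j, ‖b j‖) + 1 :=
    ⟨_, rfl⟩
  have hfpos : (0:ℝ) ≤ ∑ i, ‖f i‖ := by positivity
  have hbpos : (0:ℝ) ≤ ∑ j, ‖b j‖ := by positivity
  have hApos : 0 < A := by rw [hA]; linarith
  have hfA : ∑ i, ‖f i‖ ≤ A := by rw [hA]; linarith
  have hbA : ∑ j, ‖b j‖ ≤ A := by rw [hA]; linarith
  obtain ⟨e, he⟩ : ∃ t : ℝ, t = ε' / (8*A) := ⟨_, rfl⟩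
  have hepos : 0 < e := by rw [he]; positivity
  have hδex : ∀ l, ∃ δ, 0 < δ ∧ ∀ ζ ∈ K, dist ζ (ν l) < δ → ‖x ζ - x (ν l)‖ ≤ e := by
    intro l
    obtain ⟨δ, hδpos, hδ⟩ := Metric.continuousWithinAt_iff.mp (hcont (ν l) (hνK l)) e hepos
    exact ⟨δ, hδpos, fun ζ hζ hd => by
      have h2 := hδ hζ hd; rw [dist_eq_norm] at h2; exact h2.le⟩
  choose δf hδfpos hδf using hδex
  obtain ⟨M, hM⟩ : ∃ t : ℝ, t = 1 + e + ∑ l, ‖x (ν l)‖ := ⟨_, rfl⟩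
  have hsumnn : (0:ℝ) ≤ ∑ l, ‖x (ν l)‖ := by positivity
  have hMpos : 0 < M := by rw [hM]; linarith
  have hxM : ∀ l, ‖x (ν l)‖ + e ≤ M := by
    intro l
    have h1 : ‖x (ν l)‖ ≤ ∑ l', ‖x (ν l')‖ :=
      Finset.single_le_sum (f := fun l' => ‖x (ν l')‖) (fun l' _ => norm_nonneg _)
        (Finset.mem_univ l)
    rw [hM]; linarith
  have hxνM : ∀ l, ‖x (ν l)‖ ≤ M := fun l => by have := hxM l; linarith
  obtain ⟨γ, hγ⟩ : ∃ t : ℝ, t = e / M := ⟨_, rfl⟩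
  have hγpos : 0 < γ := by rw [hγ]; positivity
  have hγM : γ * M = e := by rw [hγ]; field_simp
  have hπ := Real.pi_pos
  obtain ⟨εang, hεang⟩ : ∃ t : ℝ, t = min (γ/(8*Real.pi)) (1/(4*Real.pi)) := ⟨_, rfl⟩
  have hεangpos : 0 < εang := hεang ▸ lt_min (by positivity) (by positivity)
  have hεang1 : 2*Real.pi*εang ≤ 1 := by
    have h1 : εang ≤ 1/(4*Real.pi) := hεang ▸ min_le_right _ _
    have h2 : 2*Real.pi*εang ≤ 2*Real.pi*(1/(4*Real.pi)) := by nlinarith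
    have h3 : 2*Real.pi*(1/(4*Real.pi)) = 1/2 := by field_simp; ring
    linarith
  have hεangγ : 4*Real.pi*εang ≤ γ := by
    have h1 : εang ≤ γ/(8*Real.pi) := hεang ▸ min_le_left _ _
    have h2 : 4*Real.pi*εang ≤ 4*Real.pi*(γ/(8*Real.pi)) := by nlinarith
    have h3 : 4*Real.pi*(γ/(8*Real.pi)) = γ/2 := by field_simp; ring
    linarith
  obtain ⟨S, hSdef⟩ : ∃ S : (Fin r ⊕ Fin s) → Set ℝ, S = fun l =>
      {θ | ∃ ζ, ζ ∈ K ∧ ζ ≠ ν l ∧ dist ζ (ν l) < δf l ∧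
        θ = |Complex.arg (ζ/(ν l))|/(2*Real.pi)} := ⟨_, rfl⟩
  have hS : ∀ l, ∀ η > 0, ∃ θ ∈ S l, 0 < θ ∧ θ ≤ η := by
    intro l η hη
    obtain ⟨ζ, hζK, hζne, hζd, hθpos, hθle⟩ :=
      angle_avail hKsub hKperf (hνK l) (hδfpos l) hη
    exact ⟨_, by rw [hSdef]; exact ⟨ζ, hζK, hζne, hζd, rfl⟩, hθpos, hθle⟩
  obtain ⟨θ, G, hθS, hsyn⟩ := combo εang hεangpos S hS Finset.univ
  obtain ⟨n, -, -, hgood⟩ := hsyn 0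
  rw [hSdef] at hθS
  choose ζf hζfK hζfne hζfd hθeq using fun l => hθS l (Finset.mem_univ l)
  have hζabs : ∀ l, ‖ζf l‖ = 1 := fun l => abs_one_of_mem hKsub (hζfK l)
  have hxe : ∀ l, ‖x (ζf l) - x (ν l)‖ ≤ e := fun l => hδf l (ζf l) (hζfK l) (hζfd l)
  have hxen : ∀ l, ‖x (ν l) - x (ζf l)‖ ≤ e := fun l => by
    rw [norm_sub_rev]; exact hxe l
  have hxζM : ∀ l, ‖x (ζf l)‖ ≤ M := by
    intro l
    have h1 : ‖x (ζf l)‖ = ‖(x (ζf l) - x (ν l)) + x (ν l)‖ := by rw [sub_add_cancel]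
    have h2 := norm_add_le (x (ζf l) - x (ν l)) (x (ν l))
    have := hxM l
    have := hxe l
    linarith [hxM l, hxe l, h1 ▸ h2]
  have hpow : ∀ l, ‖(ζf l)^n + (ν l)^n‖ ≤ γ := by
    intro l
    obtain ⟨m, hm⟩ := hgood l (Finset.mem_univ l)
    rw [hθeq l] at hm
    exact le_trans
      (ratio_pow (ν l) (ζf l) (hνabs l) (hζabs l) n m εang hεangpos.le hεang1 hm) hεangγ
  have hpow' : ∀ l, ‖(ν l)^n + (ζf l)^n‖ ≤ γ := fun l => by
    rw [add_comm]; exact hpow l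
  -- the vectors
  obtain ⟨p, hp⟩ : ∃ p : X, p = ∑ i, (f i / 2) • (x (ν (Sum.inl i)) + x (ζf (Sum.inl i))) :=
    ⟨_, rfl⟩
  obtain ⟨q, hq⟩ : ∃ q : X, q = ∑ j, (b j / 2) •
      (((ν (Sum.inr j))⁻¹)^n • x (ν (Sum.inr j))
        + ((ζf (Sum.inr j))⁻¹)^n • x (ζf (Sum.inr j))) := ⟨_, rfl⟩
  have hsum_f : ∀ c : ℝ, 0 ≤ c → c ≤ 2*e →
      ∑ i : Fin r, ‖f i‖/2 * c ≤ A * e := by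
    intro c hc0 hc2
    have h1 : ∑ i : Fin r, ‖f i‖/2 * c = (∑ i, ‖f i‖) * (c/2) := by
      rw [Finset.sum_mul]
      exact Finset.sum_congr rfl fun i _ => by ring
    rw [h1]
    have : (∑ i, ‖f i‖) * (c/2) ≤ A * (c/2) :=
      mul_le_mul_of_nonneg_right hfA (by linarith)
    have h2 : A * (c/2) ≤ A * e := mul_le_mul_of_nonneg_left (by linarith) hApos.le
    linarith
  have hsum_b : ∀ c : ℝ, 0 ≤ c → c ≤ 2*e →
      ∑ j : Fin s, ‖b j‖/2 * c ≤ A * e := by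
    intro c hc0 hc2
    have h1 : ∑ j : Fin s, ‖b j‖/2 * c = (∑ j, ‖b j‖) * (c/2) := by
      rw [Finset.sum_mul]
      exact Finset.sum_congr rfl fun j _ => by ring
    rw [h1]
    have : (∑ j, ‖b j‖) * (c/2) ≤ A * (c/2) :=
      mul_le_mul_of_nonneg_right hbA (by linarith)
    have h2 : A * (c/2) ≤ A * e := mul_le_mul_of_nonneg_left (by linarith) hApos.le
    linarith
  -- Estimate 1 : ‖p - u‖
  have hpu : ‖p - u‖ ≤ A * e := by
    have hrw : p - u = ∑ i, (f i / 2) •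
        ((1:ℂ) • x (ζf (Sum.inl i)) + (-1:ℂ) • x (ν (Sum.inl i))) := by
      rw [hp, ← hu', ← Finset.sum_sub_distrib]
      exact Finset.sum_congr rfl fun i _ => by module
    rw [hrw]
    calc ‖∑ i, (f i / 2) • ((1:ℂ) • x (ζf (Sum.inl i)) + (-1:ℂ) • x (ν (Sum.inl i)))‖
        ≤ ∑ i, ‖(f i / 2) • ((1:ℂ) • x (ζf (Sum.inl i)) + (-1:ℂ) • x (ν (Sum.inl i)))‖ :=
          norm_sum_le _ _
      _ ≤ ∑ i, ‖f i‖/2 * (e + 0 * M) := Finset.sum_le_sum fun i _ =>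
          pair_bound _ _ _ _ _ _ _ _ (by simp) (by simp) (hxe (Sum.inl i))
            (hxνM (Sum.inl i)) hMpos.le
      _ ≤ A * e := by
          refine hsum_f _ ?_ ?_ <;> simp <;> linarith
  -- Estimate 2 : ‖T^n p‖
  have hTp : ‖(T ^ n) p‖ ≤ A * e := by
    have hrw : (T ^ n) p = ∑ i, (f i / 2) •
        ((ν (Sum.inl i))^n • x (ν (Sum.inl i)) + (ζf (Sum.inl i))^n • x (ζf (Sum.inl i))) := by
      rw [hp, map_sum]
      refine Finset.sum_congr rfl fun i _ => ?_
      rw [map_smul, map_add, pow_eig T x heig n (hνK (Sum.inl i)),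
        pow_eig T x heig n (hζfK (Sum.inl i))]
    rw [hrw]
    calc ‖∑ i, (f i / 2) • ((ν (Sum.inl i))^n • x (ν (Sum.inl i))
            + (ζf (Sum.inl i))^n • x (ζf (Sum.inl i)))‖
        ≤ ∑ i, ‖(f i / 2) • ((ν (Sum.inl i))^n • x (ν (Sum.inl i))
            + (ζf (Sum.inl i))^n • x (ζf (Sum.inl i)))‖ := norm_sum_le _ _
      _ ≤ ∑ i, ‖f i‖/2 * (e + γ * M) := Finset.sum_le_sum fun i _ =>
          pair_bound _ _ _ _ _ _ _ _
            (by rw [norm_pow, hνabs (Sum.inl i), one_pow]) (hpow' (Sum.inl i))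
            (hxen (Sum.inl i)) (hxζM (Sum.inl i)) hMpos.le
      _ ≤ A * e := by
          refine hsum_f _ ?_ ?_ <;> rw [hγM] <;> linarith
  -- Estimate 3 : ‖q‖
  have hqn : ‖q‖ ≤ A * e := by
    rw [hq]
    calc ‖∑ j, (b j / 2) • (((ν (Sum.inr j))⁻¹)^n • x (ν (Sum.inr j))
            + ((ζf (Sum.inr j))⁻¹)^n • x (ζf (Sum.inr j)))‖
        ≤ ∑ j, ‖(b j / 2) • (((ν (Sum.inr j))⁻¹)^n • x (ν (Sum.inr j))
            + ((ζf (Sum.inr j))⁻¹)^n • x (ζf (Sum.inr j)))‖ := norm_sum_le _ _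
      _ ≤ ∑ j, ‖b j‖/2 * (e + γ * M) := Finset.sum_le_sum fun j _ =>
          pair_bound _ _ _ _ _ _ _ _
            (by rw [norm_pow, norm_inv, hνabs (Sum.inr j), inv_one, one_pow])
            (by rw [inv_pow_add_abs _ _ (hνabs (Sum.inr j)) (hζabs (Sum.inr j))]
                exact hpow (Sum.inr j))
            (hxen (Sum.inr j)) (hxζM (Sum.inr j)) hMpos.le
      _ ≤ A * e := by
          refine hsum_b _ ?_ ?_ <;> rw [hγM] <;> linarith
  -- Estimate 4 : ‖T^n q - v‖
  have hinv : ∀ (w : ℂ), ‖w‖ = 1 → (w⁻¹)^n * w^n = 1 := by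
    intro w hw
    have hw0 : w ≠ 0 := by intro h; rw [h] at hw; simp at hw
    rw [inv_pow, inv_mul_cancel₀ (pow_ne_zero _ hw0)]
  have hTq : ‖(T ^ n) q - v‖ ≤ A * e := by
    have hrw : (T ^ n) q - v = ∑ j, (b j / 2) •
        ((1:ℂ) • x (ζf (Sum.inr j)) + (-1:ℂ) • x (ν (Sum.inr j))) := by
      rw [hq, map_sum, ← hv', ← Finset.sum_sub_distrib]
      refine Finset.sum_congr rfl fun j _ => ?_
      rw [map_smul, map_add, map_smul, map_smul,
        pow_eig T x heig n (hνK (Sum.inr j)), pow_eig T x heig n (hζfK (Sum.inr j)),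
        smul_smul, smul_smul, hinv _ (hνabs (Sum.inr j)), hinv _ (hζabs (Sum.inr j))]
      module
    rw [hrw]
    calc ‖∑ j, (b j / 2) • ((1:ℂ) • x (ζf (Sum.inr j)) + (-1:ℂ) • x (ν (Sum.inr j)))‖
        ≤ ∑ j, ‖(b j / 2) • ((1:ℂ) • x (ζf (Sum.inr j)) + (-1:ℂ) • x (ν (Sum.inr j)))‖ :=
          norm_sum_le _ _
      _ ≤ ∑ j, ‖b j‖/2 * (e + 0 * M) := Finset.sum_le_sum fun j _ =>
          pair_bound _ _ _ _ _ _ _ _ (by simp) (by simp) (hxe (Sum.inr j))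
            (hxνM (Sum.inr j)) hMpos.le
      _ ≤ A * e := by
          refine hsum_b _ ?_ ?_ <;> simp <;> linarith
  -- conclude
  have hAe : A * e = ε' / 8 := by
    rw [he]; field_simp
  refine ⟨p + q, n, ?_, ?_⟩
  · apply hballU
    rw [Metric.mem_ball, dist_eq_norm]
    have h1 : ‖p + q - u‖ ≤ ‖p - u‖ + ‖q‖ := by
      have : p + q - u = (p - u) + q := by abel
      rw [this]; exact norm_add_le _ _
    have h2 : ε' ≤ εU := hε' ▸ min_le_left _ _
    linarith [hpu, hqn, hAe ▸ (by linarith : A * e + A * e ≤ ε' / 4)]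
  · apply hballV
    rw [Metric.mem_ball, dist_eq_norm]
    have h1 : (T ^ n) (p + q) - v = (T ^ n) p + ((T ^ n) q - v) := by
      rw [map_add]; abel
    have h2 : ‖(T ^ n) (p + q) - v‖ ≤ ‖(T ^ n) p‖ + ‖(T ^ n) q - v‖ := by
      rw [h1]; exact norm_add_le _ _
    have h3 : ε' ≤ εV := hε' ▸ min_le_right _ _
    linarith

end Transitive
end Stmt12Aux

theorem stmt_12 {X : Type*} [NormedAddCommGroup X] [NormedSpace ℂ X] [CompleteSpace X]
    [TopologicalSpace.SeparableSpace X] (hinf : ¬ FiniteDimensional ℂ X)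
    (T : X →L[ℂ] X) (K : Set ℂ) (hKsub : K ⊆ Metric.sphere (0:ℂ) 1)
    (hKcomp : IsCompact K) (hKne : K.Nonempty) (hKperf : Perfect K)
    (x : ℂ → X) (hcont : ContinuousOn x K)
    (heig : ∀ l ∈ K, T (x l) = l • x l)
    (hdense : Dense (Submodule.span ℂ (x '' K) : Set X)) :
    ∃ v : X, Dense (Set.range fun n : ℕ => (T ^ n) v) := by
  classical
  have hnX : Nonempty X := ⟨0⟩
  have hsc : SecondCountableTopology X :=
    UniformSpace.secondCountable_of_separable X
  obtain ⟨B, hBc, hBne, hBb⟩ := TopologicalSpace.exists_countable_basis X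
  obtain ⟨G, hG⟩ : ∃ G : Set X → Set X,
      G = fun W => ⋃ n : ℕ, (fun y => (T ^ n) y) ⁻¹' W := ⟨_, rfl⟩
  have hGopen : ∀ W ∈ B, IsOpen (G W) := fun W hW => by
    rw [hG]
    exact isOpen_iUnion fun n => (hBb.isOpen hW).preimage (T ^ n).continuous
  have hGdense : ∀ W ∈ B, Dense (G W) := by
    intro W hW
    rw [dense_iff_inter_open]
    intro U hU hUne
    have hWo : IsOpen W := hBb.isOpen hW
    have hWne : W.Nonempty := Set.nonempty_iff_ne_empty.2 (fun h => hBne (h ▸ hW))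
    obtain ⟨z, n, hzU, hzV⟩ := Stmt12Aux.transitive_step T K hKsub hKperf x hcont heig
      hdense U W hU hUne hWo hWne
    refine ⟨z, hzU, ?_⟩
    rw [hG]
    exact Set.mem_iUnion.2 ⟨n, hzV⟩
  have hdense2 : Dense (⋂₀ (G '' B)) := by
    apply dense_sInter_of_isOpen
    · rintro s ⟨W, hW, rfl⟩; exact hGopen W hW
    · exact hBc.image _
    · rintro s ⟨W, hW, rfl⟩; exact hGdense W hW
  obtain ⟨v0, hv0⟩ := hdense2.nonempty
  refine ⟨v0, ?_⟩
  rw [hBb.dense_iff]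
  intro o ho hone
  have hv0o : v0 ∈ G o := Set.mem_sInter.1 hv0 (G o) ⟨o, ho, rfl⟩
  rw [hG] at hv0o
  obtain ⟨n, hn⟩ := Set.mem_iUnion.1 hv0o
  exact ⟨(T ^ n) v0, hn, Set.mem_range_self n⟩
end

section
/- Let $\mathcal{H}$ be a Hilbert space, $U$ a unitary operator on $\mathcal{H}$, $h \in \mathcal{H}$, $K \subseteq \mathbb{T}$, $g \in \mathcal{H}$, and $\lambda \mapsto h_\lambda$ a map from $K$ to $\mathcal{H}$. Suppose that for every $\lambda \in K$: $U^{-1} h_\lambda = \lambda^{-1} h_\lambda + \lambda^{-1} h$, $\langle h_\lambda, Ug \rangle = \lambda^{-1}$, and $\langle h, Ug \rangle = 0$. Let $\mathcal{K} = \overline{\mathrm{span}}\{h_\lambda : \lambda \in K\}$. If $h \in \mathcal{K}$, then $U^{-1} h \in \mathcal{K}$. -/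
theorem stmt_18 {H : Type*} [NormedAddCommGroup H] [InnerProductSpace ℂ H] [CompleteSpace H]
    (U : H ≃ₗᵢ[ℂ] H) (g h : H) (K : Set ℂ) (hK : K ⊆ Metric.sphere (0:ℂ) 1)
    (hl : ℂ → H)
    (hU : ∀ l ∈ K, U.symm (hl l) = l⁻¹ • hl l + l⁻¹ • h)
    (hinner : ∀ l ∈ K, (inner ℂ (U g) (hl l) : ℂ) = l⁻¹)
    (hinner0 : (inner ℂ (U g) h : ℂ) = 0) :
    h ∈ (Submodule.span ℂ (hl '' K)).topologicalClosure →
      U.symm h ∈ (Submodule.span ℂ (hl '' K)).topologicalClosure := by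
  intro hh
  set S := Submodule.span ℂ (hl '' K) with hS
  -- the continuous linear map T x = U.symm x - ⟨Ug, x⟩ • h
  set T : H →L[ℂ] H :=
    (U.symm.toLinearIsometry.toContinuousLinearMap : H →L[ℂ] H)
      - (innerSL ℂ (U g)).smulRight h with hT
  have hTapp : ∀ x, T x = U.symm x - (inner ℂ (U g) x : ℂ) • h := by
    intro x; simp [hT]
  -- T maps S into S
  have hmap : ∀ x ∈ S, T x ∈ S := by
    intro x hx
    have : S.map (T : H →ₗ[ℂ] H) ≤ S := by
      rw [hS, Submodule.map_span, Submodule.span_le]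
      rintro _ ⟨_, ⟨l, hlK, rfl⟩, rfl⟩
      have : T (hl l) = l⁻¹ • hl l := by
        rw [hTapp, hU l hlK, hinner l hlK]
        abel
      show T (hl l) ∈ (Submodule.span ℂ (hl '' K) : Set H)
      rw [this]
      exact Submodule.smul_mem _ _ (Submodule.subset_span ⟨l, hlK, rfl⟩)
    exact this ⟨x, hx, rfl⟩
  -- hence T maps the closure into the closure
  have hmapc : T h ∈ S.topologicalClosure := by
    have hcont : Continuous T := T.continuous
    have := mem_closure_image hcont.continuousAt hh
    refine closure_mono ?_ this
    rintro _ ⟨x, hx, rfl⟩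
    exact hmap x hx
  have : T h = U.symm h := by rw [hTapp, hinner0, zero_smul, sub_zero]
  rwa [this] at hmapc
end
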